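/- For s ∈ ℕ with s ≥ 1 and the classical Stirling numbers c(n,k) (unsigned first kind) and S(n,k) (second kind), the generalized Stirling numbers S_{s,h}(n,k), defined by the recurrence S_{s,h}(n,k) = S_{s,h}(n-1,k-1) + h·(s(n-1)−(s-1)k)·S_{s,h}(n-1,k) with S_{s,h}(n,0)=S_{s,h}(0,n)=δ_{0,n}, satisfy S_{s,h}(n,k) = h^{n−k} · ∑_{j=k}^{n} s^{n−j}·(1−s)^{j−k}·c(n,j)·S(j,k). -/
import Mathlib


open Finset

/-- Unsigned Stirling numbers of the first kind. -/
def stirC : ℕ → ℕ → ℕ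
  | 0, 0 => 1
  | 0, _ + 1 => 0
  | n + 1, 0 => n * stirC n 0
  | n + 1, k + 1 => stirC n k + n * stirC n (k + 1)

/-- Stirling numbers of the second kind. -/
def stirS : ℕ → ℕ → ℕ
  | 0, 0 => 1
  | 0, _ + 1 => 0
  | _ + 1, 0 => 0
  | n + 1, k + 1 => stirS n k + (k + 1) * stirS n (k + 1)

/-- The generalized Stirling numbers `S_{s,h}(n,k)`, satisfying
`S(n,k) = S(n-1,k-1) + h (s(n-1)-(s-1)k) S(n-1,k)` with `S(n,0)=S(0,n)=δ_{0,n}`. -/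
def Ssh {K : Type*} [CommRing K] (s : ℕ) (h : K) : ℕ → ℕ → K
  | 0, 0 => 1
  | 0, _ + 1 => 0
  | _ + 1, 0 => 0
  | n + 1, k + 1 =>
      Ssh s h n k + h * (((s : ℤ) * n - ((s : ℤ) - 1) * (k + 1) : ℤ) : K) * Ssh s h n (k + 1)

lemma stirS_eq_zero_of_lt : ∀ {j k : ℕ}, j < k → stirS j k = 0
  | 0, _ + 1, _ => rfl
  | j + 1, k + 1, h => by
      have h1 : j < k := Nat.lt_of_succ_lt_succ h
      simp [stirS, stirS_eq_zero_of_lt h1, stirS_eq_zero_of_lt (Nat.lt_succ_of_lt h1)]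

lemma stirC_eq_zero_of_lt : ∀ {n j : ℕ}, n < j → stirC n j = 0
  | 0, _ + 1, _ => rfl
  | n + 1, j + 1, h => by
      have h1 : n < j := Nat.lt_of_succ_lt_succ h
      simp [stirC, stirC_eq_zero_of_lt h1, stirC_eq_zero_of_lt (Nat.lt_succ_of_lt h1)]

lemma stirC_succ_zero : ∀ n, stirC (n + 1) 0 = 0
  | 0 => by simp [stirC]
  | n + 1 => by
      rw [show stirC (n+1+1) 0 = (n+1) * stirC (n+1) 0 from rfl, stirC_succ_zero n, mul_zero]

lemma icc_eq_range {K : Type*} [CommRing K] (s n k : ℕ) :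
    ∑ j ∈ Icc k n, (s:K)^(n-j)*(1-(s:K))^(j-k)*(stirC n j : K)*(stirS j k : K)
    = ∑ j ∈ range (n+1), (s:K)^(n-j)*(1-(s:K))^(j-k)*(stirC n j : K)*(stirS j k : K) := by
  apply Finset.sum_subset
  · intro j hj
    simp only [Finset.mem_Icc] at hj
    simp only [Finset.mem_range]
    omega
  · intro j hj hnot
    simp only [Finset.mem_Icc, Finset.mem_range, not_and, not_le] at hj hnot
    have hlt : j < k := by omega
    simp [stirS_eq_zero_of_lt hlt]

lemma key {K : Type*} [CommRing K] (s n k : ℕ) :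
    (∑ j ∈ range (n+1+1), (s:K)^(n+1-j) * (1-(s:K))^(j-(k+1)) * (stirC (n+1) j : K) * (stirS j (k+1) : K))
    = (∑ j ∈ range (n+1), (s:K)^(n-j) * (1-(s:K))^(j-k) * (stirC n j : K) * (stirS j k : K))
    + ((s:K)*n - ((s:K)-1)*(k+1)) *
      (∑ j ∈ range (n+1), (s:K)^(n-j) * (1-(s:K))^(j-(k+1)) * (stirC n j : K) * (stirS j (k+1) : K)) := by
  set P : ℕ → K := fun j => (s:K)^(n-j) * (1-(s:K))^(j-k) with hP
  set H : ℕ → K := fun j => (s:K)^(n-j) * (1-(s:K))^(j-(k+1)) * (stirC n j : K) * (stirS j (k+1) : K) with hH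
  -- shift the left sum
  rw [Finset.sum_range_succ']
  have h0 : (s:K)^(n+1-0) * (1-(s:K))^(0-(k+1)) * (stirC (n+1) 0 : K) * (stirS 0 (k+1) : K) = 0 := by
    simp [stirS]
  rw [h0, add_zero]
  -- expand each shifted term
  have hterm : ∀ j ∈ range (n+1),
      (s:K)^(n+1-(j+1)) * (1-(s:K))^((j+1)-(k+1)) * (stirC (n+1) (j+1) : K) * (stirS (j+1) (k+1) : K)
      = P j * (stirC n j : K) * (stirS j k : K)
        + ((k:K)+1) * (P j * (stirC n j : K) * (stirS j (k+1) : K))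
        + (n:K) * (P j * (stirC n (j+1) : K) * ((stirS j k : K) + ((k:K)+1) * (stirS j (k+1) : K))) := by
    intro j hj
    have e1 : n + 1 - (j+1) = n - j := by omega
    have e2 : (j+1) - (k+1) = j - k := by omega
    rw [e1, e2]
    show (s:K)^(n-j) * (1-(s:K))^(j-k) * ((stirC n j + n * stirC n (j+1) : ℕ) : K)
        * ((stirS j k + (k+1) * stirS j (k+1) : ℕ) : K) = _
    push_cast
    ring
  rw [Finset.sum_congr rfl hterm]
  rw [Finset.sum_add_distrib, Finset.sum_add_distrib, ← Finset.mul_sum, ← Finset.mul_sum]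
  -- the shifted middle identity
  have hshift : ∑ j ∈ range (n+1), P j * (stirC n (j+1) : K) * ((stirS j k : K) + ((k:K)+1) * (stirS j (k+1) : K))
      = ∑ j ∈ range (n+1), (s:K) * H j := by
    rw [Finset.sum_range_succ]
    have hc : (stirC n (n+1) : K) = 0 := by
      rw [stirC_eq_zero_of_lt (Nat.lt_succ_self n)]; simp
    rw [hc]
    simp only [mul_zero, zero_mul, add_zero]
    rw [Finset.sum_range_succ' (fun j => (s:K) * H j)]
    have h0' : (s:K) * H 0 = 0 := by
      simp [hH, stirS_eq_zero_of_lt (Nat.succ_pos k)]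
    rw [h0', add_zero]
    apply Finset.sum_congr rfl
    intro j hj
    simp only [Finset.mem_range] at hj
    have e2 : (j+1) - (k+1) = j - k := by omega
    have hS : (stirS (j+1) (k+1) : K) = (stirS j k : K) + ((k:K)+1) * (stirS j (k+1) : K) := by
      show ((stirS j k + (k+1) * stirS j (k+1) : ℕ) : K) = _
      push_cast; ring
    simp only [hH, hP, e2, hS]
    obtain ⟨m, hm⟩ : ∃ m, n - j = m + 1 := ⟨n - j - 1, by omega⟩
    have e1 : n - (j+1) = m := by omega
    rw [e1, hm, pow_succ]
    ring
  rw [hshift]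
  have hG2 : ∑ j ∈ range (n+1), P j * (stirC n j : K) * (stirS j (k+1) : K)
      = (1 - (s:K)) * ∑ j ∈ range (n+1), H j := by
    rw [Finset.mul_sum]
    apply Finset.sum_congr rfl
    intro j hj
    by_cases hjk : j ≤ k
    · have hz : stirS j (k+1) = 0 := stirS_eq_zero_of_lt (by omega)
      simp [hH, hP, hz]
    · obtain ⟨m, hm⟩ : ∃ m, j - k = m + 1 := ⟨j - k - 1, by omega⟩
      have e : j - (k+1) = m := by omega
      simp only [hH, hP, e, hm, pow_succ]
      ring
  have hsH : ∑ j ∈ range (n+1), (s:K) * H j = (s:K) * ∑ j ∈ range (n+1), H j :=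
    (Finset.mul_sum _ _ _).symm
  rw [hG2, hsH]
  ring

theorem stmt_16 {K : Type*} [CommRing K] (s : ℕ) (hs : 1 ≤ s) (h : K) (n k : ℕ) :
    Ssh s h n k =
      h ^ (n - k) *
        ∑ j ∈ Finset.Icc k n,
          (s : K) ^ (n - j) * (1 - (s : K)) ^ (j - k) * (stirC n j : K) * (stirS j k : K) := by
  induction n generalizing k with
  | zero =>
    cases k with
    | zero => simp [Ssh, stirC, stirS]
    | succ k =>
      rw [Finset.Icc_eq_empty (by omega)]
      simp [Ssh]
  | succ n ih =>
    cases k with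
    | zero =>
      have hz : ∀ j ∈ Icc 0 (n+1),
          (s:K)^(n+1-j) * (1-(s:K))^(j-0) * (stirC (n+1) j : K) * (stirS j 0 : K) = 0 := by
        intro j hj
        cases j with
        | zero => simp [stirC_succ_zero]
        | succ j => simp [stirS]
      rw [Finset.sum_eq_zero hz, mul_zero]
      rfl
    | succ k =>
      have hC : ((((s : ℤ) * n - ((s : ℤ) - 1) * (k + 1) : ℤ)) : K)
          = (s:K)*n - ((s:K)-1)*((k:K)+1) := by push_cast; ring
      show Ssh s h n k + h * (((s : ℤ) * n - ((s : ℤ) - 1) * (k + 1) : ℤ) : K)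
            * Ssh s h n (k+1) = _
      rw [ih k, ih (k+1), hC, icc_eq_range s (n+1) (k+1), icc_eq_range s n k,
        icc_eq_range s n (k+1), key s n k, Nat.succ_sub_succ]
      by_cases hkn : k < n
      · obtain ⟨m, hm⟩ : ∃ m, n - k = m + 1 := ⟨n - k - 1, by omega⟩
        have e : n - (k+1) = m := by omega
        rw [e, hm, pow_succ]
        ring
      · have hz2 : ∑ j ∈ range (n+1),
            (s:K)^(n-j) * (1-(s:K))^(j-(k+1)) * (stirC n j : K) * (stirS j (k+1) : K) = 0 := by
          apply Finset.sum_eq_zero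
          intro j hj
          simp only [Finset.mem_range] at hj
          have : stirS j (k+1) = 0 := stirS_eq_zero_of_lt (by omega)
          simp [this]
        rw [hz2]
        ring
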